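/- Let φ : ℕ → ℂ and suppose the Hankel matrix Γ_φ = [φ(m+n)]_{m,n≥0} defines a bounded operator on ℓ²(ℕ,ℂ). Then the kernel of Γ_φ is either {0} or infinite-dimensional. Consequently, for K = Γ_φ*Γ_φ one has ν_K(0) = 0 or ν_K(0) = ∞. -/

import Mathlib

open scoped ENNReal ComplexOrder

noncomputable section StmtAux

namespace Stmt12Aux

local notation "H" => lp (fun _ : ℕ => ℂ) 2

/-- The forward shift on sequences. -/
def shiftFun (x : ℕ → ℂ) : ℕ → ℂ := fun n => Nat.casesOn n 0 (fun k => x k)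

lemma shiftFun_zero (x : ℕ → ℂ) : shiftFun x 0 = 0 := rfl

lemma shiftFun_succ (x : ℕ → ℂ) (n : ℕ) : shiftFun x (n + 1) = x n := rfl

lemma memℓp_shift (x : H) : Memℓp (shiftFun x) 2 := by
  apply memℓp_gen
  have hs : Summable (fun n => ‖(x : ℕ → ℂ) n‖ ^ (2 : ℝ≥0∞).toReal) :=
    (lp.memℓp x).summable (by norm_num)
  have : Summable (fun n => ‖shiftFun x (n + 1)‖ ^ (2 : ℝ≥0∞).toReal) := by
    simpa [shiftFun_succ] using hs
  exact (summable_nat_add_iff 1).mp this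

/-- The forward shift as a linear map on `ℓ²`. -/
def shiftL : H →ₗ[ℂ] H where
  toFun x := ⟨shiftFun x, memℓp_shift x⟩
  map_add' x y := by
    apply lp.ext
    funext n
    cases n with
    | zero => simp only [lp.coeFn_add, Pi.add_apply, shiftFun_zero, add_zero]
    | succ k => simp only [lp.coeFn_add, Pi.add_apply, shiftFun_succ]
  map_smul' c x := by
    apply lp.ext
    funext n
    cases n with
    | zero => simp [shiftFun_zero]
    | succ k => simp [shiftFun_succ]

lemma shiftL_coe (x : H) : (shiftL x : ℕ → ℂ) = shiftFun x := rfl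

/-- Evaluation at a coordinate as a continuous linear functional on `ℓ²`. -/
def evalCLM (m : ℕ) : H →L[ℂ] ℂ :=
  LinearMap.mkContinuous
    { toFun := fun x => (x : ℕ → ℂ) m
      map_add' := fun x y => by simp
      map_smul' := fun c x => by simp }
    1
    (fun x => by
      simpa using (one_mul ‖x‖).symm ▸
        lp.norm_apply_le_norm (by norm_num : (2 : ℝ≥0∞) ≠ 0) x m)

lemma evalCLM_apply (m : ℕ) (x : H) : evalCLM m x = (x : ℕ → ℂ) m := rfl

/-- Pointwise formula for the Hankel operator. -/
lemma hasSum_apply (φ : ℕ → ℂ) (Γ : H →L[ℂ] H)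
    (hΓ : ∀ m n : ℕ, (Γ (lp.single 2 n 1) : ∀ _ : ℕ, ℂ) m = φ (m + n))
    (x : H) (m : ℕ) :
    HasSum (fun n => (x : ℕ → ℂ) n * φ (m + n)) ((Γ x : ℕ → ℂ) m) := by
  have h1 : HasSum (fun n : ℕ => lp.single 2 n ((x : ℕ → ℂ) n)) x :=
    lp.hasSum_single (by norm_num) x
  have h2 := (h1.mapL Γ).mapL (evalCLM m)
  have key : ∀ n : ℕ, evalCLM m (Γ (lp.single 2 n ((x : ℕ → ℂ) n)))
      = (x : ℕ → ℂ) n * φ (m + n) := by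
    intro n
    have : (lp.single 2 n ((x : ℕ → ℂ) n) : H) = (x : ℕ → ℂ) n • (lp.single 2 n (1 : ℂ) : H) := by
      rw [← lp.single_smul]
      simp
    rw [this, map_smul, map_smul, evalCLM_apply, hΓ m n, smul_eq_mul]
  simpa [Function.comp, key, evalCLM_apply] using h2

/-- The kernel of a Hankel operator is shift invariant. -/
lemma shift_mem_ker (φ : ℕ → ℂ) (Γ : H →L[ℂ] H)
    (hΓ : ∀ m n : ℕ, (Γ (lp.single 2 n 1) : ∀ _ : ℕ, ℂ) m = φ (m + n))
    (x : H) (hx : Γ x = 0) : Γ (shiftL x) = 0 := by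
  apply lp.ext
  funext m
  have h1 : HasSum (fun n => (shiftL x : ℕ → ℂ) n * φ (m + n)) ((Γ (shiftL x) : ℕ → ℂ) m) :=
    hasSum_apply φ Γ hΓ (shiftL x) m
  have h2 : HasSum (fun n => (x : ℕ → ℂ) n * φ (m + 1 + n)) ((Γ x : ℕ → ℂ) (m + 1)) :=
    hasSum_apply φ Γ hΓ x (m + 1)
  -- reindex h2 along `Nat.succ`
  have hinj : Function.Injective Nat.succ := Nat.succ_injective
  have hzero : ∀ n ∉ Set.range Nat.succ, (shiftL x : ℕ → ℂ) n * φ (m + n) = 0 := by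
    intro n hn
    have : n = 0 := by
      cases n with
      | zero => rfl
      | succ k => exact absurd ⟨k, rfl⟩ hn
    subst this
    rw [shiftL_coe, shiftFun_zero, zero_mul]
  have hcomp : (fun n => (shiftL x : ℕ → ℂ) n * φ (m + n)) ∘ Nat.succ
      = fun n => (x : ℕ → ℂ) n * φ (m + 1 + n) := by
    funext k
    simp only [Function.comp]
    rw [shiftL_coe]
    have : m + Nat.succ k = m + 1 + k := by omega
    rw [this]
    rfl
  have h3 : HasSum (fun n => (shiftL x : ℕ → ℂ) n * φ (m + n)) ((Γ x : ℕ → ℂ) (m + 1)) := by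
    rw [← hinj.hasSum_iff hzero, hcomp]
    exact h2
  have := h1.unique h3
  rw [this, hx]
  simp

/-- The shift has no eigenvectors. -/
lemma shift_no_eigen (x : H) (μ : ℂ) (h : shiftL x = μ • x) : x = 0 := by
  have hp : ∀ n, shiftFun x n = μ * (x : ℕ → ℂ) n := by
    intro n
    have := congrArg (fun y : H => (y : ℕ → ℂ) n) h
    simpa [shiftL_coe] using this
  have hzero : ∀ n, (x : ℕ → ℂ) n = 0 := by
    by_cases hμ : μ = 0
    · intro n
      have := hp (n + 1)
      rw [shiftFun_succ, hμ, zero_mul] at this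
      exact this
    · intro n
      induction n with
      | zero =>
        have := hp 0
        rw [shiftFun_zero] at this
        exact (mul_eq_zero.mp this.symm).resolve_left hμ
      | succ k ih =>
        have := hp (k + 1)
        rw [shiftFun_succ, ih] at this
        exact (mul_eq_zero.mp this.symm).resolve_left hμ
  apply lp.ext
  funext n
  simpa using hzero n

/-- Main dichotomy for the kernel of a Hankel operator. -/
lemma ker_dichotomy (φ : ℕ → ℂ) (Γ : H →L[ℂ] H)
    (hΓ : ∀ m n : ℕ, (Γ (lp.single 2 n 1) : ∀ _ : ℕ, ℂ) m = φ (m + n)) :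
    LinearMap.ker (Γ : H →ₗ[ℂ] H) = ⊥
      ∨ ¬ FiniteDimensional ℂ (LinearMap.ker (Γ : H →ₗ[ℂ] H)) := by
  by_cases hk : LinearMap.ker (Γ : H →ₗ[ℂ] H) = ⊥
  · exact Or.inl hk
  · right
    intro hfd
    haveI : Nontrivial (LinearMap.ker (Γ : H →ₗ[ℂ] H)) :=
      Submodule.nontrivial_iff_ne_bot.mpr hk
    -- restrict the shift to the kernel
    have hres : ∀ x ∈ LinearMap.ker (Γ : H →ₗ[ℂ] H),
        shiftL x ∈ LinearMap.ker (Γ : H →ₗ[ℂ] H) := by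
      intro x hx
      have hx' : Γ x = 0 := hx
      exact shift_mem_ker φ Γ hΓ x hx'
    set f : Module.End ℂ (LinearMap.ker (Γ : H →ₗ[ℂ] H)) :=
      shiftL.restrict hres with hf
    obtain ⟨μ, hμ⟩ := Module.End.exists_eigenvalue f
    obtain ⟨v, hv⟩ := hμ.exists_hasEigenvector
    have hv1 : f v = μ • v := hv.apply_eq_smul
    have hv2 : shiftL (v : H) = μ • (v : H) := by
      have := congrArg (Subtype.val) hv1
      simpa [hf, LinearMap.restrict_apply] using this
    have : (v : H) = 0 := shift_no_eigen (v : H) μ hv2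
    exact hv.2 (Subtype.ext this)

end Stmt12Aux

end StmtAux

/-- The kernel of a bounded Hankel operator `Γ_φ = [φ(m+n)]` on `ℓ²(ℕ,ℂ)` is either `{0}`
or infinite-dimensional; consequently `ν_K(0) ∈ {0, ∞}` for `K = Γ_φ*Γ_φ`. -/
theorem stmt_12 (φ : ℕ → ℂ)
    (Γ : lp (fun _ : ℕ => ℂ) 2 →L[ℂ] lp (fun _ : ℕ => ℂ) 2)
    (hΓ : ∀ m n : ℕ, (Γ (lp.single 2 n 1) : ∀ _ : ℕ, ℂ) m = φ (m + n)) :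
    (LinearMap.ker (Γ : lp (fun _ : ℕ => ℂ) 2 →ₗ[ℂ] lp (fun _ : ℕ => ℂ) 2) = ⊥
      ∨ ¬ FiniteDimensional ℂ
          (LinearMap.ker (Γ : lp (fun _ : ℕ => ℂ) 2 →ₗ[ℂ] lp (fun _ : ℕ => ℂ) 2)))
    ∧ (LinearMap.ker ((ContinuousLinearMap.adjoint Γ ∘L Γ :
          lp (fun _ : ℕ => ℂ) 2 →L[ℂ] lp (fun _ : ℕ => ℂ) 2) :
          lp (fun _ : ℕ => ℂ) 2 →ₗ[ℂ] lp (fun _ : ℕ => ℂ) 2) = ⊥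
      ∨ ¬ FiniteDimensional ℂ
          (LinearMap.ker ((ContinuousLinearMap.adjoint Γ ∘L Γ :
            lp (fun _ : ℕ => ℂ) 2 →L[ℂ] lp (fun _ : ℕ => ℂ) 2) :
            lp (fun _ : ℕ => ℂ) 2 →ₗ[ℂ] lp (fun _ : ℕ => ℂ) 2))) := by
  have h1 := Stmt12Aux.ker_dichotomy φ Γ hΓ
  have hker : LinearMap.ker ((ContinuousLinearMap.adjoint Γ ∘L Γ :
      lp (fun _ : ℕ => ℂ) 2 →L[ℂ] lp (fun _ : ℕ => ℂ) 2) :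
      lp (fun _ : ℕ => ℂ) 2 →ₗ[ℂ] lp (fun _ : ℕ => ℂ) 2)
      = LinearMap.ker (Γ : lp (fun _ : ℕ => ℂ) 2 →ₗ[ℂ] lp (fun _ : ℕ => ℂ) 2) := by
    ext x
    simp only [LinearMap.mem_ker, ContinuousLinearMap.coe_coe,
      ContinuousLinearMap.comp_apply]
    constructor
    · intro hx
      have h0 : inner ℂ (Γ x) (Γ x) = (0 : ℂ) := by
        rw [← ContinuousLinearMap.adjoint_inner_left, hx, inner_zero_left]
      exact inner_self_eq_zero.mp h0
    · intro hx
      rw [hx, map_zero]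
  exact ⟨h1, hker ▸ h1⟩
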